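/- Let L be a connected simple graph and let K₀, K₁, K₂ be connected subgraphs of L (in the sense of SimpleGraph.Subgraph, each containing its own vertex set) such that K₁ ⊔ K₂ = L and K₁ ⊓ K₂ = K₀ (joins and meets taken vertex- and edge-wise). Let A₀, A₁, A₂, B be spanning trees of K₀, K₁, K₂, L respectively, with A₀ ≤ A₁, A₀ ≤ A₂, A₁ ≤ B and A₂ ≤ B. Then B = A₁ ⊔ A₂ and A₁ ⊓ A₂ = A₀. -/

import Mathlib

/-- `A` is a spanning tree of the subgraph `H`: `A` is a subgraph of `H` containing every
vertex of `H`, connected, and acyclic. -/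
def SubgraphIsSpanningTreeOf {V : Type*} {L : SimpleGraph V} (A H : L.Subgraph) : Prop :=
  A ≤ H ∧ A.verts = H.verts ∧ A.Connected ∧ A.coe.IsAcyclic

private lemma acyclic_mono {V : Type*} {L : SimpleGraph V} {C D : L.Subgraph}
    (hCD : C ≤ D) (hD : D.coe.IsAcyclic) : C.coe.IsAcyclic := by
  intro v p hp
  exact hD (p.map (SimpleGraph.Subgraph.inclusion hCD))
    (hp.map (SimpleGraph.Subgraph.inclusion.injective hCD))

/-- Key lemma: a connected subgraph of an acyclic subgraph containing all its vertices
equals it. -/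
private lemma key {V : Type*} {L : SimpleGraph V} {C D : L.Subgraph}
    (hCD : C ≤ D) (hC : C.Connected) (hD : D.coe.IsAcyclic)
    (hv : D.verts ⊆ C.verts) : D ≤ C := by
  refine ⟨hv, fun {u v} hadj => ?_⟩
  have hu : u ∈ C.verts := hv (D.edge_vert hadj)
  have hvv : v ∈ C.verts := hv (D.edge_vert hadj.symm)
  obtain ⟨w⟩ := hC ⟨u, hu⟩ ⟨v, hvv⟩
  have hD' : D.coe.Adj ⟨u, hCD.1 hu⟩ ⟨v, hCD.1 hvv⟩ := hadj
  -- map the path to D.coe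
  set f := SimpleGraph.Subgraph.inclusion hCD
  have hf : Function.Injective f := SimpleGraph.Subgraph.inclusion.injective hCD
  classical
  obtain ⟨pw, hp⟩ := w.toPath
  have hq : (pw.map f).IsPath := SimpleGraph.Walk.map_isPath_of_injective hf hp
  have heq := hD.path_unique ⟨pw.map f, hq⟩ (SimpleGraph.Path.singleton hD')
  have hlen : (pw.map f).length = 1 := by
    have : pw.map f = (SimpleGraph.Path.singleton hD').val :=
      congrArg Subtype.val heq
    rw [this]
    rfl
  rw [SimpleGraph.Walk.length_map] at hlen
  match pw, hlen with
  | SimpleGraph.Walk.cons h SimpleGraph.Walk.nil, _ => exact h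

theorem spanning_trees_union_inter {V : Type*} {L : SimpleGraph V} (hL : L.Connected)
    (K₀ K₁ K₂ : L.Subgraph) (hK₀ : K₀.Connected) (hK₁ : K₁.Connected) (hK₂ : K₂.Connected)
    (hunion : K₁ ⊔ K₂ = (⊤ : L.Subgraph)) (hinter : K₁ ⊓ K₂ = K₀)
    (A₀ A₁ A₂ B : L.Subgraph)
    (hA₀ : SubgraphIsSpanningTreeOf A₀ K₀) (hA₁ : SubgraphIsSpanningTreeOf A₁ K₁)
    (hA₂ : SubgraphIsSpanningTreeOf A₂ K₂) (hB : SubgraphIsSpanningTreeOf B ⊤)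
    (h01 : A₀ ≤ A₁) (h02 : A₀ ≤ A₂) (h1B : A₁ ≤ B) (h2B : A₂ ≤ B) :
    B = A₁ ⊔ A₂ ∧ A₁ ⊓ A₂ = A₀ := by
  obtain ⟨hA₀le, hA₀v, hA₀c, hA₀a⟩ := hA₀
  obtain ⟨hA₁le, hA₁v, hA₁c, hA₁a⟩ := hA₁
  obtain ⟨hA₂le, hA₂v, hA₂c, hA₂a⟩ := hA₂
  obtain ⟨hBle, hBv, hBc, hBa⟩ := hB
  have h0ne : A₀.verts.Nonempty := by
    rw [hA₀v]; exact hK₀.nonempty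
  have h012 : A₀ ≤ A₁ ⊓ A₂ := le_inf h01 h02
  have hsupc : (A₁ ⊔ A₂).Connected :=
    SimpleGraph.Subgraph.connected_sup hA₁c.preconnected hA₂c.preconnected (h0ne.mono h012.1)
  have hsupv : B.verts ⊆ (A₁ ⊔ A₂).verts := by
    have : (A₁ ⊔ A₂).verts = (⊤ : L.Subgraph).verts := by
      show A₁.verts ∪ A₂.verts = _
      rw [hA₁v, hA₂v, ← hunion]; rfl
    rw [hBv, this]
  have hB1 : B = A₁ ⊔ A₂ :=
    le_antisymm (key (sup_le h1B h2B) hsupc hBa hsupv) (sup_le h1B h2B)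
  refine ⟨hB1, ?_⟩
  have hinta : (A₁ ⊓ A₂).coe.IsAcyclic := acyclic_mono (le_trans inf_le_left h1B) hBa
  have hintv : (A₁ ⊓ A₂).verts ⊆ A₀.verts := by
    show A₁.verts ∩ A₂.verts ⊆ _
    rw [hA₁v, hA₂v, hA₀v, ← hinter]
    exact le_of_eq rfl
  exact le_antisymm (key h012 hA₀c hinta hintv) h012
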